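/- arXiv:1611.00977 — 9 statements merged into one kernel-verified Lean document; each statement's English description precedes it below -/
import Mathlib

section
/- (Theorem 1, mixing form.) For any classical strategy (m, b) for the communication complexity game, define λ(x, ν) = (1/d) · |{x0 ∈ ZMod d : m(x0, x) − x0 = ν}| for x ∈ X, ν ∈ ZMod d, and define weights w(a) = ∏_{x ∈ X} λ(x, a(x)) for each a : X → ZMod d. Then w(a) ≥ 0 for every a, ∑_{a : X → ZMod d} w(a) = 1, and I(m, b) = ∑_{a : X → ZMod d} w(a) · I(m_a, b); that is, the payoff of any (possibly nonlinear) strategy is a convex (probabilistic) mixture of the payoffs of linear strategies. -/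
open Finset

/-- The average payoff of a classical strategy `(m, b)` in the communication complexity
game determined by input weights `p`, payoff coefficients `c` and target functions `F`. -/
noncomputable def payoff (d : ℕ) [NeZero d] {X Y J : Type} [Fintype X] [Fintype Y] [Fintype J]
    (p : X × Y → ℝ) (c : J × X × Y → ℝ) (F : J × X × Y → ZMod d)
    (m : ZMod d × X → ZMod d) (b : Y → ZMod d) : ℝ :=
  (1 / (d : ℝ)) * ∑ x0 : ZMod d, ∑ xy : X × Y, p xy * ∑ j : J,
    c (j, xy.1, xy.2) *
      (if m (x0, xy.1) + b xy.2 = x0 + F (j, xy.1, xy.2) then (1 : ℝ) else 0)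

/-- Theorem 1 (mixing form): the payoff of any (possibly nonlinear) classical strategy is a
convex mixture of the payoffs of linear strategies `m_a(x0, x) = x0 + a x`. -/
theorem theorem1_mixing (d : ℕ) [NeZero d] (X Y J : Type)
    [Fintype X] [DecidableEq X] [Fintype Y] [Fintype J]
    (p : X × Y → ℝ) (hp : ∀ xy, 0 ≤ p xy)
    (c : J × X × Y → ℝ) (F : J × X × Y → ZMod d)
    (m : ZMod d × X → ZMod d) (b : Y → ZMod d)
    (lam : X → ZMod d → ℝ)
    (hlam : ∀ x ν, lam x ν =
      (1 / (d : ℝ)) * ((univ.filter fun x0 : ZMod d => m (x0, x) - x0 = ν).card : ℝ))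
    (w : (X → ZMod d) → ℝ) (hw : ∀ a, w a = ∏ x : X, lam x (a x)) :
    (∀ a : X → ZMod d, 0 ≤ w a) ∧
    (∑ a : X → ZMod d, w a = 1) ∧
    payoff d p c F m b =
      ∑ a : X → ZMod d, w a * payoff d p c F (fun z => z.1 + a z.2) b := by
  have hd : (d : ℝ) ≠ 0 := Nat.cast_ne_zero.mpr (NeZero.ne d)
  have hlam_nonneg : ∀ x ν, 0 ≤ lam x ν := by
    intro x ν; rw [hlam]; positivity
  have hlam_sum : ∀ x, ∑ ν : ZMod d, lam x ν = 1 := by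
    intro x
    simp only [hlam]
    rw [← Finset.mul_sum, ← Nat.cast_sum,
      ← Finset.card_eq_sum_card_fiberwise
        (f := fun x0 : ZMod d => m (x0, x) - x0) (t := (univ : Finset (ZMod d)))
        (fun a _ => Finset.mem_univ _)]
    simp [Finset.card_univ, ZMod.card d, hd]
  -- lam as an average of indicators
  have hlam' : ∀ (x : X) (ν : ZMod d),
      lam x ν = (1 / (d : ℝ)) * ∑ x0 : ZMod d,
        (if m (x0, x) - x0 = ν then (1 : ℝ) else 0) := by
    intro x ν
    rw [hlam, Finset.sum_boole]
  -- key mixing identity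
  have hB : ∀ (x : X) (ν : ZMod d),
      (∑ a : X → ZMod d, w a * (if a x = ν then (1:ℝ) else 0)) = lam x ν := by
    intro x ν
    have key : ∀ a : X → ZMod d,
        w a * (if a x = ν then (1:ℝ) else 0)
          = ∏ x' : X, (if x' = x then (if a x' = ν then lam x' (a x') else 0)
              else lam x' (a x')) := by
      intro a
      by_cases h : a x = ν
      · rw [hw, if_pos h, mul_one]
        refine Finset.prod_congr rfl fun x' _ => ?_
        by_cases hx : x' = x
        · subst hx; simp [h]
        · simp [hx]
      · rw [if_neg h, mul_zero]
        refine (Finset.prod_eq_zero (Finset.mem_univ x) ?_).symm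
        simp [h]
    simp only [key]
    rw [← Fintype.piFinset_univ, ← Finset.prod_univ_sum (fun _ => (univ : Finset (ZMod d)))
      (fun x' k => if x' = x then (if k = ν then lam x' k else 0) else lam x' k)]
    have : ∀ x' : X, (∑ k : ZMod d, (if x' = x then (if k = ν then lam x' k else 0)
        else lam x' k)) = if x' = x then lam x ν else 1 := by
      intro x'
      by_cases hx : x' = x
      · subst hx; simp [Finset.sum_ite_eq']
      · simp [hx, hlam_sum]
    simp only [this, Finset.prod_ite_eq', Finset.mem_univ, if_true]
  refine ⟨fun a => by rw [hw]; exact Finset.prod_nonneg fun x _ => hlam_nonneg x (a x), ?_, ?_⟩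
  · simp only [hw]
    rw [← Fintype.piFinset_univ, ← Finset.prod_univ_sum]
    simp [hlam_sum]
  · -- payoff identity
    have lhs_eq : payoff d p c F m b
        = ∑ xy : X × Y, p xy * ∑ j : J, c (j, xy.1, xy.2) *
            lam xy.1 (F (j, xy.1, xy.2) - b xy.2) := by
      unfold payoff
      rw [Finset.sum_comm, Finset.mul_sum]
      refine Finset.sum_congr rfl fun xy _ => ?_
      rw [← Finset.mul_sum, ← mul_assoc, mul_comm (1 / (d:ℝ)) (p xy), mul_assoc]
      congr 1
      rw [Finset.sum_comm, Finset.mul_sum]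
      refine Finset.sum_congr rfl fun j _ => ?_
      rw [← Finset.mul_sum, ← mul_assoc, mul_comm (1 / (d:ℝ)) _, mul_assoc]
      congr 1
      rw [hlam']
      congr 1
      refine Finset.sum_congr rfl fun x0 _ => ?_
      congr 1
      have : (m (x0, xy.1) + b xy.2 = x0 + F (j, xy.1, xy.2)) ↔
          (m (x0, xy.1) - x0 = F (j, xy.1, xy.2) - b xy.2) := by
        rw [sub_eq_sub_iff_add_eq_add]
        constructor <;> intro h <;> linear_combination h
      simp [this]
    have lin_eq : ∀ a : X → ZMod d,
        payoff d p c F (fun z => z.1 + a z.2) b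
          = ∑ xy : X × Y, p xy * ∑ j : J, c (j, xy.1, xy.2) *
              (if a xy.1 = F (j, xy.1, xy.2) - b xy.2 then (1:ℝ) else 0) := by
      intro a
      unfold payoff
      have : ∀ x0 : ZMod d, ∀ xy : X × Y, ∀ j : J,
          ((x0 + a xy.1 + b xy.2 = x0 + F (j, xy.1, xy.2)) ↔
            (a xy.1 = F (j, xy.1, xy.2) - b xy.2)) := by
        intro x0 xy j
        rw [eq_sub_iff_add_eq, add_assoc, add_right_inj]
      simp only [this]
      rw [Finset.sum_const, Finset.card_univ, ZMod.card d, nsmul_eq_mul]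
      rw [← mul_assoc, one_div, inv_mul_cancel₀ hd, one_mul]
    rw [lhs_eq]
    simp only [lin_eq, Finset.mul_sum]
    rw [Finset.sum_comm (s := (univ : Finset (X → ZMod d))) (t := (univ : Finset (X × Y)))]
    refine Finset.sum_congr rfl fun xy _ => ?_
    rw [Finset.sum_comm (s := (univ : Finset (X → ZMod d))) (t := (univ : Finset J))]
    refine Finset.sum_congr rfl fun j _ => ?_
    rw [← hB xy.1 (F (j, xy.1, xy.2) - b xy.2)]
    simp only [Finset.mul_sum]
    refine Finset.sum_congr rfl fun a _ => ?_
    ring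
end

section
/- (Theorem 1, optimality of linear strategies.) For every classical strategy (m, b) for the communication complexity game there exists a function a : X → ZMod d such that I(m, b) ≤ I(m_a, b); hence the optimal classical performance is achieved by a linear strategy. -/
open Finset

/-- Theorem 1 (optimality of linear strategies): every classical strategy `(m, b)` is
outperformed (weakly) by some linear strategy `m_a(x0, x) = x0 + a x` with the same `b`. -/
theorem theorem1_linear_optimal (d : ℕ) [NeZero d] (X Y J : Type)
    [Fintype X] [Fintype Y] [Fintype J]
    (p : X × Y → ℝ) (hp : ∀ xy, 0 ≤ p xy)
    (c : J × X × Y → ℝ) (F : J × X × Y → ZMod d)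
    (m : ZMod d × X → ZMod d) (b : Y → ZMod d) :
    ∃ a : X → ZMod d, payoff d p c F m b ≤ payoff d p c F (fun z => z.1 + a z.2) b := by
  set h : X → ZMod d → ℝ := fun x s => ∑ y : Y, p (x, y) * ∑ j : J,
    c (j, x, y) * (if s + b y = F (j, x, y) then (1 : ℝ) else 0) with hh
  have key : ∀ m' : ZMod d × X → ZMod d,
      payoff d p c F m' b = (1 / (d : ℝ)) * ∑ x0 : ZMod d, ∑ x : X, h x (m' (x0, x) - x0) := by
    intro m'
    unfold payoff
    congr 1
    refine Finset.sum_congr rfl fun x0 _ => ?_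
    rw [Fintype.sum_prod_type]
    refine Finset.sum_congr rfl fun x _ => ?_
    simp only [hh]
    refine Finset.sum_congr rfl fun y _ => ?_
    congr 1
    refine Finset.sum_congr rfl fun j _ => ?_
    congr 1
    refine if_congr ?_ rfl rfl
    rw [sub_add_eq_add_sub, sub_eq_iff_eq_add, add_comm (F (j, x, y)) x0]
  have hmax : ∀ x : X, ∃ s : ZMod d, ∀ t : ZMod d, h x t ≤ h x s := by
    intro x
    obtain ⟨s, -, hs⟩ := Finset.exists_max_image (Finset.univ : Finset (ZMod d)) (h x)
      Finset.univ_nonempty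
    exact ⟨s, fun t => hs t (Finset.mem_univ t)⟩
  choose a ha using hmax
  refine ⟨a, ?_⟩
  rw [key m, key (fun z => z.1 + a z.2)]
  have hd : (0 : ℝ) ≤ 1 / (d : ℝ) := by positivity
  refine mul_le_mul_of_nonneg_left ?_ hd
  refine Finset.sum_le_sum fun x0 _ => Finset.sum_le_sum fun x _ => ?_
  simp only [add_sub_cancel_left]
  exact ha x _
end

section
/- (Theorem 2, mixing form for correlation-assisted strategies.) For any correlation q and any correlation-assisted message function μ : ZMod d × X × ZMod d → ZMod d, define λ(x, α, ν) = (1/d) · |{x0 ∈ ZMod d : μ(x0, x, α) − x0 = ν}| and define weights w(ξ) = ∏_{(x,α) ∈ X × ZMod d} λ(x, α, ξ(x,α)) for each ξ : X × ZMod d → ZMod d. Then w(ξ) ≥ 0 for every ξ, ∑_{ξ : X × ZMod d → ZMod d} w(ξ) = 1, and I_q(μ) = ∑_{ξ : X × ZMod d → ZMod d} w(ξ) · I_q(μ_ξ); that is, the payoff of any correlation-assisted messaging strategy is a convex mixture of payoffs of linear messaging strategies. -/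
open Finset

/-- The average payoff of a correlation-assisted strategy with message function `μ`
(depending on `x0`, Alice's input `x` and Alice's outcome `α`), where Bob outputs
`μ + β` for his outcome `β`, in the communication complexity game determined by input
weights `p`, payoff coefficients `c`, target functions `F` and correlation `q`. -/
noncomputable def qpayoff (d : ℕ) [NeZero d] {X Y J : Type} [Fintype X] [Fintype Y] [Fintype J]
    (p : X × Y → ℝ) (c : J × X × Y → ℝ) (F : J × X × Y → ZMod d)
    (q : X × Y → ZMod d × ZMod d → ℝ)
    (μ : ZMod d × X × ZMod d → ZMod d) : ℝ :=
  (1 / (d : ℝ)) * ∑ x0 : ZMod d, ∑ xy : X × Y, p xy * ∑ j : J,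
    c (j, xy.1, xy.2) * ∑ ab : ZMod d × ZMod d, q xy ab *
      (if μ (x0, xy.1, ab.1) + ab.2 = x0 + F (j, xy.1, xy.2) then (1 : ℝ) else 0)

set_option maxHeartbeats 1000000 in
/-- Auxiliary: extracting one marginal from a sum over functions of products. -/
lemma delta_sum {A B : Type} [Fintype A] [DecidableEq A] [Fintype B] [DecidableEq B]
    (f : A → B → ℝ) (h1 : ∀ a, ∑ b : B, f a b = 1) (a0 : A) (ν : B) :
    ∑ ξ : A → B, (∏ a : A, f a (ξ a)) * (if ξ a0 = ν then (1 : ℝ) else 0) = f a0 ν := by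
  have hterm : ∀ ξ : A → B,
      (∏ a : A, f a (ξ a)) * (if ξ a0 = ν then (1 : ℝ) else 0)
        = ∏ a : A, (fun a b => if a = a0 then f a b * (if b = ν then (1 : ℝ) else 0)
            else f a b) a (ξ a) := by
    intro ξ
    have : (∏ a : A, (fun a b => if a = a0 then f a b * (if b = ν then (1 : ℝ) else 0)
            else f a b) a (ξ a))
        = ∏ a : A, (f a (ξ a) * (if a = a0 then (if ξ a = ν then (1 : ℝ) else 0) else 1)) := by
      refine Finset.prod_congr rfl fun a _ => ?_
      by_cases h : a = a0 <;> simp [h]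
    rw [this, Finset.prod_mul_distrib, Finset.prod_ite_eq' univ a0
      (fun a => if ξ a = ν then (1 : ℝ) else 0)]
    simp
  calc ∑ ξ : A → B, (∏ a : A, f a (ξ a)) * (if ξ a0 = ν then (1 : ℝ) else 0)
      = ∑ ξ : A → B, ∏ a : A, (fun a b => if a = a0 then f a b * (if b = ν then (1 : ℝ) else 0)
            else f a b) a (ξ a) := Finset.sum_congr rfl fun ξ _ => hterm ξ
    _ = ∏ a : A, ∑ b : B, (fun a b => if a = a0 then f a b * (if b = ν then (1 : ℝ) else 0)
            else f a b) a b := (Fintype.prod_sum (κ := fun _ : A => B)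
              (fun a b => if a = a0 then f a b * (if b = ν then (1 : ℝ) else 0)
                else f a b)).symm
    _ = f a0 ν := by
        rw [Finset.prod_eq_single a0
          (fun a _ ha => by simp only [if_neg ha]; exact h1 a)
          (fun h => absurd (mem_univ a0) h)]
        simp only [if_pos rfl]
        simp [mul_ite, mul_one, mul_zero, Finset.sum_ite_eq' univ ν (f a0)]

/-- Theorem 2 (mixing form): the payoff of any correlation-assisted messaging strategy is
a convex mixture of the payoffs of the linear strategies `μ_ξ(x0, x, α) = x0 + ξ (x, α)`. -/
theorem theorem2_mixing (d : ℕ) [NeZero d] (X Y J : Type)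
    [Fintype X] [DecidableEq X] [Fintype Y] [Fintype J]
    (p : X × Y → ℝ) (hp : ∀ xy, 0 ≤ p xy)
    (c : J × X × Y → ℝ) (F : J × X × Y → ZMod d)
    (q : X × Y → ZMod d × ZMod d → ℝ)
    (hq0 : ∀ xy ab, 0 ≤ q xy ab) (hq1 : ∀ xy, ∑ ab : ZMod d × ZMod d, q xy ab = 1)
    (μ : ZMod d × X × ZMod d → ZMod d)
    (lam : X → ZMod d → ZMod d → ℝ)
    (hlam : ∀ x α ν, lam x α ν =
      (1 / (d : ℝ)) * ((univ.filter fun x0 : ZMod d => μ (x0, x, α) - x0 = ν).card : ℝ))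
    (w : (X × ZMod d → ZMod d) → ℝ)
    (hw : ∀ ξ, w ξ = ∏ xα : X × ZMod d, lam xα.1 xα.2 (ξ xα)) :
    (∀ ξ : X × ZMod d → ZMod d, 0 ≤ w ξ) ∧
    (∑ ξ : X × ZMod d → ZMod d, w ξ = 1) ∧
    qpayoff d p c F q μ =
      ∑ ξ : X × ZMod d → ZMod d,
        w ξ * qpayoff d p c F q (fun z => z.1 + ξ (z.2.1, z.2.2)) := by
  have hd : (d : ℝ) ≠ 0 := Nat.cast_ne_zero.mpr (NeZero.ne d)
  have hlam0 : ∀ x α ν, 0 ≤ lam x α ν := by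
    intro x α ν
    rw [hlam]
    positivity
  have lamsum : ∀ x α, ∑ ν : ZMod d, lam x α ν = 1 := by
    intro x α
    simp only [hlam]
    rw [← Finset.mul_sum, ← Nat.cast_sum]
    have hcard : ∑ ν : ZMod d,
        (univ.filter fun x0 : ZMod d => μ (x0, x, α) - x0 = ν).card
          = (univ : Finset (ZMod d)).card := by
      exact (Finset.card_eq_sum_card_fiberwise
        (f := fun x0 : ZMod d => μ (x0, x, α) - x0) (t := univ)
        (fun x _ => mem_univ _)).symm
    rw [hcard, Finset.card_univ, ZMod.card]
    field_simp
  -- the key marginal identity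
  have key : ∀ (x : X) (α : ZMod d) (ν : ZMod d),
      ∑ ξ : X × ZMod d → ZMod d, w ξ * (if ξ (x, α) = ν then (1 : ℝ) else 0)
        = lam x α ν := by
    intro x α ν
    simp only [hw]
    exact delta_sum (fun xα b => lam xα.1 xα.2 b) (fun a => lamsum a.1 a.2) (x, α) ν
  refine ⟨?_, ?_, ?_⟩
  · intro ξ
    rw [hw]
    exact Finset.prod_nonneg fun xα _ => hlam0 _ _ _
  · simp only [hw]
    rw [← Fintype.prod_sum (κ := fun _ : X × ZMod d => ZMod d)]
    simp [lamsum]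
  · -- common middle expression
    have L1 : qpayoff d p c F q μ
        = ∑ xy : X × Y, ∑ j : J, ∑ ab : ZMod d × ZMod d,
            p xy * (c (j, xy.1, xy.2) * (q xy ab *
              lam xy.1 ab.1 (F (j, xy.1, xy.2) - ab.2))) := by
      rw [qpayoff]
      simp only [Finset.mul_sum]
      rw [Finset.sum_comm]
      refine Finset.sum_congr rfl fun xy _ => ?_
      rw [Finset.sum_comm]
      refine Finset.sum_congr rfl fun j _ => ?_
      rw [Finset.sum_comm]
      refine Finset.sum_congr rfl fun ab _ => ?_
      have step : ∑ x0 : ZMod d, 1 / (d : ℝ) * (p xy * (c (j, xy.1, xy.2) * (q xy ab *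
            (if μ (x0, xy.1, ab.1) + ab.2 = x0 + F (j, xy.1, xy.2) then (1 : ℝ) else 0))))
          = p xy * (c (j, xy.1, xy.2) * (q xy ab * (1 / (d : ℝ) *
            ∑ x0 : ZMod d,
              (if μ (x0, xy.1, ab.1) + ab.2 = x0 + F (j, xy.1, xy.2) then (1 : ℝ) else 0)))) := by
        rw [Finset.mul_sum, Finset.mul_sum, Finset.mul_sum, Finset.mul_sum]
        exact Finset.sum_congr rfl fun x0 _ => by ring
      rw [step, hlam]
      have hiff : ∀ x0 : ZMod d,
          (μ (x0, xy.1, ab.1) + ab.2 = x0 + F (j, xy.1, xy.2))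
            ↔ (μ (x0, xy.1, ab.1) - x0 = F (j, xy.1, xy.2) - ab.2) := by
        intro x0
        constructor <;> intro h <;> linear_combination h
      have : ∑ x0 : ZMod d,
          (if μ (x0, xy.1, ab.1) + ab.2 = x0 + F (j, xy.1, xy.2) then (1 : ℝ) else 0)
          = ((univ.filter fun x0 : ZMod d =>
              μ (x0, xy.1, ab.1) - x0 = F (j, xy.1, xy.2) - ab.2).card : ℝ) := by
        simp only [hiff]
        exact Finset.sum_boole _ _
      rw [this]
    have L2 : ∀ ξ : X × ZMod d → ZMod d,
        qpayoff d p c F q (fun z => z.1 + ξ (z.2.1, z.2.2))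
          = ∑ xy : X × Y, p xy * ∑ j : J, c (j, xy.1, xy.2) *
              ∑ ab : ZMod d × ZMod d, q xy ab *
                (if ξ (xy.1, ab.1) = F (j, xy.1, xy.2) - ab.2 then (1 : ℝ) else 0) := by
      intro ξ
      rw [qpayoff]
      have hterm : ∀ x0 : ZMod d,
          (∑ xy : X × Y, p xy * ∑ j : J, c (j, xy.1, xy.2) *
            ∑ ab : ZMod d × ZMod d, q xy ab *
              (if (fun z : ZMod d × X × ZMod d => z.1 + ξ (z.2.1, z.2.2)) (x0, xy.1, ab.1)
                  + ab.2 = x0 + F (j, xy.1, xy.2) then (1 : ℝ) else 0))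
          = ∑ xy : X × Y, p xy * ∑ j : J, c (j, xy.1, xy.2) *
              ∑ ab : ZMod d × ZMod d, q xy ab *
                (if ξ (xy.1, ab.1) = F (j, xy.1, xy.2) - ab.2 then (1 : ℝ) else 0) := by
        intro x0
        refine Finset.sum_congr rfl fun xy _ => ?_
        congr 1
        refine Finset.sum_congr rfl fun j _ => ?_
        congr 1
        refine Finset.sum_congr rfl fun ab _ => ?_
        congr 1
        have : (x0 + ξ (xy.1, ab.1) + ab.2 = x0 + F (j, xy.1, xy.2))
            ↔ (ξ (xy.1, ab.1) = F (j, xy.1, xy.2) - ab.2) := by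
          constructor <;> intro h <;> linear_combination h
        simp only [this]
      simp only [hterm]
      rw [Finset.sum_const, Finset.card_univ, ZMod.card, nsmul_eq_mul]
      rw [← mul_assoc, one_div, inv_mul_cancel₀ hd, one_mul]
    have L3 : (∑ ξ : X × ZMod d → ZMod d,
          w ξ * ∑ xy : X × Y, p xy * ∑ j : J, c (j, xy.1, xy.2) *
              ∑ ab : ZMod d × ZMod d, q xy ab *
                (if ξ (xy.1, ab.1) = F (j, xy.1, xy.2) - ab.2 then (1 : ℝ) else 0))
        = ∑ xy : X × Y, ∑ j : J, ∑ ab : ZMod d × ZMod d,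
            p xy * (c (j, xy.1, xy.2) * (q xy ab *
              lam xy.1 ab.1 (F (j, xy.1, xy.2) - ab.2))) := by
      simp only [Finset.mul_sum]
      rw [Finset.sum_comm]
      refine Finset.sum_congr rfl fun xy _ => ?_
      rw [Finset.sum_comm]
      refine Finset.sum_congr rfl fun j _ => ?_
      rw [Finset.sum_comm]
      refine Finset.sum_congr rfl fun ab _ => ?_
      have step : ∑ ξ : X × ZMod d → ZMod d,
          w ξ * (p xy * (c (j, xy.1, xy.2) * (q xy ab *
            (if ξ (xy.1, ab.1) = F (j, xy.1, xy.2) - ab.2 then (1 : ℝ) else 0))))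
          = p xy * (c (j, xy.1, xy.2) * (q xy ab *
              ∑ ξ : X × ZMod d → ZMod d, w ξ *
                (if ξ (xy.1, ab.1) = F (j, xy.1, xy.2) - ab.2 then (1 : ℝ) else 0))) := by
        rw [Finset.mul_sum, Finset.mul_sum, Finset.mul_sum]
        exact Finset.sum_congr rfl fun ξ _ => by ring
      rw [step, key]
    rw [L1]
    simp only [L2]
    exact L3.symm
end

section
/- (Theorem 2, optimality of linear messaging with correlations.) For every correlation q and every correlation-assisted message function μ : ZMod d × X × ZMod d → ZMod d there exists ξ : X × ZMod d → ZMod d such that I_q(μ) ≤ I_q(μ_ξ); hence the optimal correlation-assisted (in particular entanglement-assisted) performance is achieved by a linear messaging strategy. -/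
open Finset

/-- Theorem 2 (optimality of linear messaging): every correlation-assisted messaging
strategy `μ` is outperformed (weakly) by some linear strategy
`μ_ξ(x0, x, α) = x0 + ξ (x, α)`. -/
theorem theorem2_linear_optimal (d : ℕ) [NeZero d] (X Y J : Type)
    [Fintype X] [Fintype Y] [Fintype J]
    (p : X × Y → ℝ) (hp : ∀ xy, 0 ≤ p xy)
    (c : J × X × Y → ℝ) (F : J × X × Y → ZMod d)
    (q : X × Y → ZMod d × ZMod d → ℝ)
    (hq0 : ∀ xy ab, 0 ≤ q xy ab) (hq1 : ∀ xy, ∑ ab : ZMod d × ZMod d, q xy ab = 1)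
    (μ : ZMod d × X × ZMod d → ZMod d) :
    ∃ ξ : X × ZMod d → ZMod d,
      qpayoff d p c F q μ ≤ qpayoff d p c F q (fun z => z.1 + ξ (z.2.1, z.2.2)) := by
  set S : ZMod d → ℝ := fun x0 => ∑ xy : X × Y, p xy * ∑ j : J,
    c (j, xy.1, xy.2) * ∑ ab : ZMod d × ZMod d, q xy ab *
      (if μ (x0, xy.1, ab.1) + ab.2 = x0 + F (j, xy.1, xy.2) then (1 : ℝ) else 0) with hS
  obtain ⟨x0s, hx0s⟩ := Finite.exists_max S
  refine ⟨fun xa => μ (x0s, xa.1, xa.2) - x0s, ?_⟩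
  have hdpos : (0 : ℝ) < (d : ℝ) := by
    exact_mod_cast Nat.pos_of_ne_zero (NeZero.ne d)
  have key : qpayoff d p c F q
      (fun z => z.1 + (fun xa : X × ZMod d => μ (x0s, xa.1, xa.2) - x0s) (z.2.1, z.2.2))
      = S x0s := by
    unfold qpayoff
    have hconst : ∀ x0 : ZMod d, (∑ xy : X × Y, p xy * ∑ j : J,
        c (j, xy.1, xy.2) * ∑ ab : ZMod d × ZMod d, q xy ab *
        (if x0 + (μ (x0s, xy.1, ab.1) - x0s) + ab.2 = x0 + F (j, xy.1, xy.2)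
          then (1 : ℝ) else 0)) = S x0s := by
      intro x0
      rw [hS]
      refine Finset.sum_congr rfl fun xy _ => ?_
      congr 1
      refine Finset.sum_congr rfl fun j _ => ?_
      congr 1
      refine Finset.sum_congr rfl fun ab _ => ?_
      congr 1
      by_cases h : μ (x0s, xy.1, ab.1) + ab.2 = x0s + F (j, xy.1, xy.2)
      · rw [if_pos (by linear_combination h), if_pos h]
      · rw [if_neg (fun hc => h (by linear_combination hc)), if_neg h]
    simp only [hconst, Finset.sum_const, Finset.card_univ, ZMod.card, nsmul_eq_mul]
    field_simp
  rw [key]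
  have h1 : qpayoff d p c F q μ = (1 / (d : ℝ)) * ∑ x0 : ZMod d, S x0 := rfl
  rw [h1]
  have h2 : ∑ x0 : ZMod d, S x0 ≤ (d : ℝ) * S x0s := by
    calc ∑ x0 : ZMod d, S x0 ≤ ∑ _x0 : ZMod d, S x0s :=
          Finset.sum_le_sum fun i _ => hx0s i
      _ = (d : ℝ) * S x0s := by
          simp [Finset.sum_const, Finset.card_univ, ZMod.card, nsmul_eq_mul]
  calc (1 / (d : ℝ)) * ∑ x0 : ZMod d, S x0 ≤ (1 / (d : ℝ)) * ((d : ℝ) * S x0s) := by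
        apply mul_le_mul_of_nonneg_left h2 (by positivity)
    _ = S x0s := by field_simp
end

section
/- (Theorem 3, prepare-transmit-measure reproduces the entanglement-assisted payoff.) Let ρ : Matrix (A × B) (A × B) ℂ, let Π : X → ZMod d → Matrix A A ℂ (Alice's measurement operators) and Q : Y → ZMod d → Matrix B B ℂ (Bob's measurement operators). Define the prepared states ρ_{x0,x} := (d : ℂ) • Tr_A((Π x (−x0) ⊗ 1) * ρ) for x0 ∈ ZMod d, x ∈ X. Then the prepare-transmit-measure payoff (1/d) · ∑_{x0 ∈ ZMod d} ∑_{(x,y) ∈ X × Y} (p(x,y) : ℂ) · ∑_{j ∈ J} (c(j,x,y) : ℂ) · trace(ρ_{x0,x} * Q y (x0 + F(j,x,y))) equals the entanglement-assisted linear-strategy (Bell) payoff ∑_{(x,y) ∈ X × Y} (p(x,y) : ℂ) · ∑_{j ∈ J} (c(j,x,y) : ℂ) · ∑_{α ∈ ZMod d} trace((Π x α ⊗ Q y (F(j,x,y) − α)) * ρ). -/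
open Kronecker

/-- Partial trace over the first tensor factor:
`trA M j k = ∑ i, M (i, j) (i, k)`. -/
noncomputable def trA {A B : Type} [Fintype A] (M : Matrix (A × B) (A × B) ℂ) :
    Matrix B B ℂ :=
  fun j k => ∑ i : A, M (i, j) (i, k)

lemma key_trace {A B : Type} [Fintype A] [Fintype B] [DecidableEq B]
    (P : Matrix A A ℂ) (Q : Matrix B B ℂ) (ρ : Matrix (A × B) (A × B) ℂ) :
    ((trA ((P ⊗ₖ (1 : Matrix B B ℂ)) * ρ)) * Q).trace = ((P ⊗ₖ Q) * ρ).trace := by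
  simp only [Matrix.trace, Matrix.diag, Matrix.mul_apply, trA,
    Matrix.kroneckerMap_apply, Matrix.one_apply, Fintype.sum_prod_type,
    mul_ite, mul_zero, ite_mul, zero_mul, mul_one, Finset.sum_ite_eq,
    Finset.mem_univ, if_true, Finset.sum_mul, Finset.mul_sum]
  rw [Finset.sum_comm]
  conv_lhs => enter [2, x1]; rw [Finset.sum_comm]
  conv_lhs => enter [2, x1, 2, x2]; rw [Finset.sum_comm]
  rw [Finset.sum_comm]
  exact Finset.sum_congr rfl fun _ _ => Finset.sum_congr rfl fun _ _ =>
    Finset.sum_congr rfl fun _ _ => Finset.sum_congr rfl fun _ _ => by ring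

/-- Theorem 3: the prepare-transmit-measure protocol whose prepared states are
`ρ_{x0,x} = d • Tr_A ((Π x (-x0) ⊗ 1) * ρ)` achieves exactly the entanglement-assisted
linear-strategy (Bell) payoff of the state `ρ` with Alice's measurement operators `Pa`
and Bob's measurement operators `Q`. -/
theorem theorem3_ptm_reproduces_bell (d : ℕ) [NeZero d] (A B X Y J : Type)
    [Fintype A] [DecidableEq A] [Fintype B] [DecidableEq B]
    [Fintype X] [Fintype Y] [Fintype J]
    (p : X × Y → ℝ) (c : J × X × Y → ℝ) (F : J × X × Y → ZMod d)
    (ρ : Matrix (A × B) (A × B) ℂ)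
    (Pa : X → ZMod d → Matrix A A ℂ) (Q : Y → ZMod d → Matrix B B ℂ) :
    (1 / (d : ℂ)) * ∑ x0 : ZMod d, ∑ xy : X × Y, (p xy : ℂ) * ∑ j : J,
        (c (j, xy.1, xy.2) : ℂ) *
          (((d : ℂ) • trA ((Pa xy.1 (-x0) ⊗ₖ (1 : Matrix B B ℂ)) * ρ)) *
            Q xy.2 (x0 + F (j, xy.1, xy.2))).trace
      = ∑ xy : X × Y, (p xy : ℂ) * ∑ j : J, (c (j, xy.1, xy.2) : ℂ) *
          ∑ α : ZMod d,
            ((Pa xy.1 α ⊗ₖ Q xy.2 (F (j, xy.1, xy.2) - α)) * ρ).trace := by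
  have hd : (d : ℂ) ≠ 0 := Nat.cast_ne_zero.mpr (NeZero.ne d)
  rw [Finset.sum_comm]
  have step : ∀ xy : X × Y,
      ∑ x0 : ZMod d, (p xy : ℂ) * ∑ j : J, (c (j, xy.1, xy.2) : ℂ) *
          (((d : ℂ) • trA ((Pa xy.1 (-x0) ⊗ₖ (1 : Matrix B B ℂ)) * ρ)) *
            Q xy.2 (x0 + F (j, xy.1, xy.2))).trace
        = (d : ℂ) * ((p xy : ℂ) * ∑ j : J, (c (j, xy.1, xy.2) : ℂ) *
            ∑ α : ZMod d,
              ((Pa xy.1 α ⊗ₖ Q xy.2 (F (j, xy.1, xy.2) - α)) * ρ).trace) := by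
    intro xy
    simp only [Matrix.smul_mul, Matrix.trace_smul, smul_eq_mul, key_trace]
    have reidx : ∀ j : J,
        ∑ α : ZMod d, ((Pa xy.1 α ⊗ₖ Q xy.2 (F (j, xy.1, xy.2) - α)) * ρ).trace
          = ∑ x0 : ZMod d,
              ((Pa xy.1 (-x0) ⊗ₖ Q xy.2 (x0 + F (j, xy.1, xy.2))) * ρ).trace := by
      intro j
      refine Fintype.sum_equiv (Equiv.neg (ZMod d)) _ _ fun α => ?_
      simp [Equiv.neg_apply, sub_eq_add_neg, add_comm, neg_neg]
    simp only [reidx, Finset.mul_sum]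
    rw [Finset.sum_comm]
    refine Finset.sum_congr rfl fun x0 _ => ?_
    exact Finset.sum_congr rfl fun α _ => by ring
  simp only [step, ← Finset.mul_sum]
  rw [← mul_assoc, one_div_mul_cancel hd, one_mul]
end

section
/- (Lemma 1, converse rigidity part, support version.) If s ∈ ZMod d is such that K(l) = 0 for every l ∈ ZMod d with l ≠ s, then n(x) = n(0) + s·x for all x ∈ ZMod d, and K(s) = ω^{n(0)}; that is, if only one Fourier coefficient is nonzero then the exponent function is linear and that coefficient is a power of ω. -/
open Finset

/-- Lemma 1 (converse rigidity part, support version): if the discrete Fourier transform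
`K l = (1/d) ∑ x, ω^{-(l·x)} ω^{n x}` of `B x = ω^{n x}` vanishes at every index `l ≠ s`,
then the exponent function is linear, `n x = n 0 + s·x`, and `K s = ω^{n 0}`. -/
theorem lemma1_converse_rigidity_support (d : ℕ) [NeZero d]
    (ω : ℂ) (hω : ω = Complex.exp (2 * Real.pi * Complex.I / d))
    (n : ZMod d → ZMod d) (s : ZMod d)
    (h : ∀ l : ZMod d, l ≠ s →
      (1 / (d : ℂ)) * (∑ x : ZMod d, (ω ^ (l * x).val)⁻¹ * ω ^ (n x).val) = 0) :
    (∀ x : ZMod d, n x = n 0 + s * x) ∧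
    (1 / (d : ℂ)) * (∑ x : ZMod d, (ω ^ (s * x).val)⁻¹ * ω ^ (n x).val) = ω ^ (n 0).val := by
  have hdne : d ≠ 0 := NeZero.ne d
  have hd : (d : ℂ) ≠ 0 := Nat.cast_ne_zero.mpr hdne
  have hprim : IsPrimitiveRoot ω d := by
    rw [hω]; exact Complex.isPrimitiveRoot_exp d hdne
  have hω1 : ω ^ d = 1 := hprim.pow_eq_one
  have hωne : ω ≠ 0 := by rw [hω]; exact Complex.exp_ne_zero _
  have hpowmod : ∀ m : ℕ, ω ^ (m % d) = ω ^ m := by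
    intro m
    conv_rhs => rw [← Nat.div_add_mod m d]
    rw [pow_add, pow_mul, hω1, one_pow, one_mul]
  have hpow_add : ∀ a b : ZMod d, ω ^ (a + b).val = ω ^ a.val * ω ^ b.val := by
    intro a b
    rw [ZMod.val_add, hpowmod, pow_add]
  -- orthogonality
  have horth : ∀ t : ZMod d,
      ∑ l : ZMod d, ω ^ (l * t).val = if t = 0 then (d : ℂ) else 0 := by
    intro t
    have h1 : ∀ l : ZMod d, ω ^ (l * t).val = (ω ^ t.val) ^ l.val := by
      intro l
      rw [ZMod.val_mul, hpowmod, mul_comm l.val, pow_mul]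
    have h2 : ∑ l : ZMod d, ω ^ (l * t).val
        = ∑ i ∈ Finset.range d, (ω ^ t.val) ^ i := by
      simp_rw [h1]
      refine Finset.sum_nbij' (fun l => l.val) (fun i => (i : ZMod d)) ?_ ?_ ?_ ?_ ?_
      · intro l _; exact Finset.mem_range.mpr (ZMod.val_lt l)
      · intro i _; exact Finset.mem_univ _
      · intro l _; simp [ZMod.natCast_val, ZMod.cast_id]
      · intro i hi; exact ZMod.val_cast_of_lt (Finset.mem_range.mp hi)
      · intro l _; rfl
    rw [h2]
    by_cases ht : t = 0
    · simp [ht, hdne]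
    · have hz1 : (ω ^ t.val) ≠ 1 :=
        hprim.pow_ne_one_of_pos_of_lt (ZMod.val_pos.mpr ht).ne' (ZMod.val_lt t)
      rw [if_neg ht, geom_sum_eq hz1]
      have : (ω ^ t.val) ^ d = 1 := by
        rw [← pow_mul, mul_comm, pow_mul, hω1, one_pow]
      rw [this, sub_self, zero_div]
  -- Fourier inversion
  have key : ∀ y : ZMod d,
      ∑ l : ZMod d, (1 / (d : ℂ)) * (∑ x : ZMod d, (ω ^ (l * x).val)⁻¹ * ω ^ (n x).val)
        * ω ^ (l * y).val = ω ^ (n y).val := by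
    intro y
    have step : ∀ l x : ZMod d,
        (ω ^ (l * x).val)⁻¹ * ω ^ (n x).val * ω ^ (l * y).val
          = ω ^ (n x).val * ω ^ (l * (y - x)).val := by
      intro l x
      have : l * y = l * x + l * (y - x) := by ring
      rw [show ω ^ (l * y).val = ω ^ (l * x).val * ω ^ (l * (y - x)).val by
        rw [this, hpow_add]]
      field_simp
    calc ∑ l : ZMod d, (1 / (d : ℂ)) * (∑ x : ZMod d, (ω ^ (l * x).val)⁻¹ * ω ^ (n x).val)
          * ω ^ (l * y).val
        = ∑ l : ZMod d, ∑ x : ZMod d,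
            (1 / (d : ℂ)) * (ω ^ (n x).val * ω ^ (l * (y - x)).val) := by
          refine Finset.sum_congr rfl fun l _ => ?_
          rw [mul_assoc, Finset.sum_mul, Finset.mul_sum]
          exact Finset.sum_congr rfl fun x _ => by rw [step l x]
      _ = ∑ x : ZMod d,
            (1 / (d : ℂ)) * (ω ^ (n x).val * ∑ l : ZMod d, ω ^ (l * (y - x)).val) := by
          rw [Finset.sum_comm]
          exact Finset.sum_congr rfl fun x _ => by
            rw [Finset.mul_sum, Finset.mul_sum]
      _ = ∑ x : ZMod d,
            (1 / (d : ℂ)) * (ω ^ (n x).val * (if y - x = 0 then (d : ℂ) else 0)) := by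
          simp_rw [horth]
      _ = ω ^ (n y).val := by
          rw [Finset.sum_eq_single y]
          · simp only [sub_self, if_pos rfl, ↓reduceIte]
            field_simp
          · intro x _ hx
            rw [if_neg (sub_ne_zero.mpr (Ne.symm hx)), mul_zero, mul_zero]
          · intro hy; exact absurd (Finset.mem_univ y) hy
  have keyS : ∀ y : ZMod d,
      ω ^ (n y).val
        = (1 / (d : ℂ)) * (∑ x : ZMod d, (ω ^ (s * x).val)⁻¹ * ω ^ (n x).val)
          * ω ^ (s * y).val := by
    intro y
    rw [← key y, Finset.sum_eq_single s]
    · intro l _ hl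
      rw [h l hl, zero_mul]
    · intro hs; exact absurd (Finset.mem_univ s) hs
  have hKs : (1 / (d : ℂ)) * (∑ x : ZMod d, (ω ^ (s * x).val)⁻¹ * ω ^ (n x).val)
      = ω ^ (n 0).val := by
    have := keyS 0
    simpa using this.symm
  refine ⟨?_, hKs⟩
  intro y
  have h1 : ω ^ (n y).val = ω ^ (n 0 + s * y).val := by
    rw [keyS y, hKs, ← hpow_add]
  have := hprim.pow_inj (ZMod.val_lt (n y)) (ZMod.val_lt (n 0 + s * y)) h1
  exact ZMod.val_injective d this
end

section
/- (Lemma 1, converse rigidity part, modulus version.) If s ∈ ZMod d is such that |K(s)| = 1, then there exists t ∈ ZMod d with n(x) = t + s·x for all x ∈ ZMod d (and then K(s) = ω^t); that is, a Fourier coefficient of B has unit modulus only when the exponent function is linear. -/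
open Finset

/-- Lemma 1 (converse rigidity part, modulus version): a coefficient
`K s = (1/d) ∑ x, ω^{-(s·x)} ω^{n x}` of the discrete Fourier transform of `B x = ω^{n x}`
has unit modulus only when the exponent function is linear, `n x = t + s·x`,
in which case `K s = ω^t`. -/
theorem lemma1_converse_rigidity_modulus (d : ℕ) [NeZero d]
    (ω : ℂ) (hω : ω = Complex.exp (2 * Real.pi * Complex.I / d))
    (n : ZMod d → ZMod d) (s : ZMod d)
    (h : ‖
      ((1 / (d : ℂ)) * ∑ x : ZMod d, (ω ^ (s * x).val)⁻¹ * ω ^ (n x).val)‖ = 1) :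
    ∃ t : ZMod d, (∀ x : ZMod d, n x = t + s * x) ∧
      (1 / (d : ℂ)) * (∑ x : ZMod d, (ω ^ (s * x).val)⁻¹ * ω ^ (n x).val) = ω ^ t.val := by
  have hd0 : d ≠ 0 := NeZero.ne d
  have hdpos : 0 < (d : ℝ) := by positivity
  have hdC : (d : ℂ) ≠ 0 := by exact_mod_cast hd0
  have hprim : IsPrimitiveRoot ω d := hω ▸ Complex.isPrimitiveRoot_exp d hd0
  have hωd : ω ^ d = 1 := hprim.pow_eq_one
  have habs : ‖ω‖ = 1 := by
    have h1 : ‖ω‖ ^ d = 1 := by rw [← norm_pow, hωd, norm_one]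
    have h2 := (pow_eq_one_iff_cases (a := ‖ω‖) (n := d)).mp h1
    rcases h2 with h2 | h2 | h2
    · exact absurd h2 hd0
    · exact h2
    · nlinarith [norm_nonneg ω]
  set F : ZMod d → ℂ := fun a => ω ^ a.val with hF
  have hmod : ∀ m : ℕ, ω ^ (m % d) = ω ^ m := fun m => by
    conv_rhs => rw [← Nat.mod_add_div m d, pow_add, pow_mul, hωd, one_pow, mul_one]
  have hmul : ∀ a b : ZMod d, F (a + b) = F a * F b := fun a b => by
    simp only [hF, ZMod.val_add, hmod, pow_add]
  have hFabs : ∀ a : ZMod d, ‖F a‖ = 1 := fun a => by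
    simp [hF, map_pow, habs]
  have hFne : ∀ a : ZMod d, F a ≠ 0 := fun a => by
    intro h0; have := hFabs a; rw [h0] at this; simp at this
  have hterm : ∀ x : ZMod d, (ω ^ (s * x).val)⁻¹ * ω ^ (n x).val = F (n x - s * x) := by
    intro x
    have h1 : F (n x - s * x) * F (s * x) = F (n x) := by
      rw [← hmul, sub_add_cancel]
    have hne := hFne (s * x)
    show (F (s * x))⁻¹ * F (n x) = F (n x - s * x)
    rw [← h1, mul_comm (F (n x - s * x)) (F (s * x)), inv_mul_cancel_left₀ hne]
  set g : ZMod d → ℂ := fun x => F (n x - s * x) with hg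
  have hsum : (∑ x : ZMod d, (ω ^ (s * x).val)⁻¹ * ω ^ (n x).val) = ∑ x : ZMod d, g x := by
    exact Finset.sum_congr rfl fun x _ => hterm x
  have hcard : Fintype.card (ZMod d) = d := ZMod.card d
  set c : ℂ := ∑ x : ZMod d, g x with hc
  have hSabs : ‖c‖ = d := by
    rw [hsum] at h
    rw [norm_mul] at h
    have : ‖(1 / (d : ℂ))‖ = 1 / d := by
      simp [norm_div, Complex.norm_natCast]
    rw [this] at h
    field_simp at h
    linarith [h]
  -- equality in triangle inequality: all terms equal
  have hre : ∀ x : ZMod d, ((starRingEnd ℂ) c * g x).re = d := by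
    intro x
    set r : ZMod d → ℝ := fun x => ((starRingEnd ℂ) c * g x).re with hr
    have hsum_r : ∑ y : ZMod d, r y = (d : ℝ) ^ 2 := by
      have : ∑ y : ZMod d, (starRingEnd ℂ) c * g y = (starRingEnd ℂ) c * c := by
        rw [← Finset.mul_sum, ← hc]
      have h2 : (∑ y : ZMod d, (starRingEnd ℂ) c * g y).re = ((starRingEnd ℂ) c * c).re := by
        rw [this]
      have h3 : ((starRingEnd ℂ) c * c) = ((‖c‖ ^ 2 : ℝ) : ℂ) := by
        rw [mul_comm, Complex.mul_conj, Complex.normSq_eq_norm_sq]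
      rw [h3] at h2
      simp only [hr]
      rw [Complex.re_sum] at h2
      rw [h2, Complex.ofReal_re, hSabs]
    have hub : ∀ y : ZMod d, r y ≤ (d : ℝ) := by
      intro y
      have h1 : r y ≤ ‖(starRingEnd ℂ) c * g y‖ := Complex.re_le_norm _
      have h2 : ‖(starRingEnd ℂ) c * g y‖ = d := by
        rw [norm_mul, Complex.norm_conj, hSabs, hFabs, mul_one]
      linarith
    by_contra hne
    have hlt : r x < (d : ℝ) := lt_of_le_of_ne (hub x) hne
    have : ∑ y : ZMod d, r y < ∑ _y : ZMod d, (d : ℝ) :=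
      Finset.sum_lt_sum (fun y _ => hub y) ⟨x, Finset.mem_univ x, hlt⟩
    rw [Finset.sum_const, Finset.card_univ, hcard, nsmul_eq_mul] at this
    rw [hsum_r] at this
    nlinarith
  have heq : ∀ x : ZMod d, (starRingEnd ℂ) c * g x = (d : ℂ) := by
    intro x
    set z := (starRingEnd ℂ) c * g x with hz
    have habz : ‖z‖ = d := by
      rw [hz, norm_mul, Complex.norm_conj, hSabs, hFabs, mul_one]
    have hrez : z.re = d := hre x
    have him : z.im = 0 := by
      have h1 : ‖z‖ ^ 2 = z.re ^ 2 + z.im ^ 2 := by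
        rw [Complex.sq_norm, Complex.normSq_apply]; ring
      rw [habz, hrez] at h1
      nlinarith
    apply Complex.ext
    · simpa using hrez
    · simp [him]
  have hcne : (starRingEnd ℂ) c ≠ 0 := by
    intro h0
    have : c = 0 := by
      have := congrArg (starRingEnd ℂ) h0
      simpa using this
    rw [this] at hSabs
    simp at hSabs
    exact hd0 (by exact_mod_cast hSabs.symm)
  have hgconst : ∀ x : ZMod d, g x = g 0 := by
    intro x
    have h1 := heq x
    have h2 := heq 0
    have : (starRingEnd ℂ) c * g x = (starRingEnd ℂ) c * g 0 := by rw [h1, h2]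
    exact mul_left_cancel₀ hcne this
  have hinj : ∀ a b : ZMod d, F a = F b → a = b := fun a b hab =>
    ZMod.val_injective d (hprim.pow_inj (ZMod.val_lt a) (ZMod.val_lt b) hab)
  refine ⟨n 0, fun x => ?_, ?_⟩
  · have h1 : g x = g 0 := hgconst x
    have h2 : F (n x - s * x) = F (n 0) := by
      simpa [hg, mul_zero, sub_zero] using h1
    have h3 : n x - s * x = n 0 := hinj _ _ h2
    linear_combination h3
  · rw [hsum]
    have hgv : ∀ x : ZMod d, g x = F (n 0) := fun x => by
      simpa [hg, mul_zero, sub_zero] using hgconst x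
    have hcval : c = (d : ℂ) * F (n 0) := by
      rw [hc, Finset.sum_congr rfl fun x _ => hgv x, Finset.sum_const, Finset.card_univ, hcard,
        nsmul_eq_mul]
    rw [hcval]
    show (1 / (d : ℂ)) * ((d : ℂ) * ω ^ (n 0).val) = ω ^ (n 0).val
    field_simp
end

section
/- (Lemma 2.) Let λ_ν = (1/d) · |{x ∈ ZMod d : n(x) − x = ν}| for ν ∈ ZMod d, so that K(1) = ∑_ν λ_ν · ω^ν. Then for every natural number r, the l = r Fourier coefficient of the r-th power of B satisfies (1/d) · ∑_{x ∈ ZMod d} ω^{−((r : ZMod d)·x)} · B(x)^r = ∑_{ν ∈ ZMod d} λ_ν · (ω^ν)^r; that is, it is the convex combination of the r-th powers of the roots ω^ν with the same coefficients λ_ν as K(1). -/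
open Finset

/-- Lemma 2: with `λ_ν = (1/d) · #{x : n x - x = ν}` (the convex weights of
`K 1 = ∑ ν, λ_ν ω^ν`), for every natural number `r` the `l = r` Fourier coefficient of
`B^r`, where `B x = ω^{n x}`, equals `∑ ν, λ_ν (ω^ν)^r`: the convex combination of the
`r`-th powers of the roots with the same coefficients. -/
theorem lemma2_powers (d : ℕ) [NeZero d]
    (ω : ℂ) (hω : ω = Complex.exp (2 * Real.pi * Complex.I / d))
    (n : ZMod d → ZMod d)
    (lam : ZMod d → ℝ)
    (hlam : ∀ ν, lam ν =
      (1 / (d : ℝ)) * ((univ.filter fun x : ZMod d => n x - x = ν).card : ℝ))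
    (r : ℕ) :
    (1 / (d : ℂ)) * ∑ x : ZMod d, (ω ^ (((r : ZMod d)) * x).val)⁻¹ * (ω ^ (n x).val) ^ r
      = ∑ ν : ZMod d, (lam ν : ℂ) * (ω ^ ν.val) ^ r := by
  have hd : (d : ℂ) ≠ 0 := Nat.cast_ne_zero.mpr (NeZero.ne d)
  have hne : ω ≠ 0 := by rw [hω]; exact Complex.exp_ne_zero _
  have hωd : ω ^ d = 1 := by
    rw [hω, ← Complex.exp_nat_mul]
    have : (d : ℂ) * (2 * Real.pi * Complex.I / d) = 2 * Real.pi * Complex.I := by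
      field_simp
    rw [this, Complex.exp_two_pi_mul_I]
  have hmod : ∀ m : ℕ, ω ^ (m % d) = ω ^ m := by
    intro m
    conv_rhs => rw [← Nat.mod_add_div m d]
    rw [pow_add, pow_mul, hωd, one_pow, mul_one]
  have hpow : ∀ (a : ZMod d) (k : ℕ), (ω ^ a.val) ^ k = ω ^ (((k : ZMod d)) * a).val := by
    intro a k
    rw [← pow_mul, ZMod.val_mul, hmod, ZMod.val_natCast, ← hmod ((k % d) * a.val),
      Nat.mod_mul_mod, hmod, mul_comm]
  have hadd : ∀ a b : ZMod d, ω ^ (a + b).val = ω ^ a.val * ω ^ b.val := by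
    intro a b
    rw [← pow_add, ZMod.val_add, hmod]
  have key : ∀ x : ZMod d,
      (ω ^ (((r : ZMod d)) * x).val)⁻¹ * (ω ^ (n x).val) ^ r
        = (ω ^ ((n x - x).val)) ^ r := by
    intro x
    rw [hpow, hpow]
    rw [inv_mul_eq_iff_eq_mul₀ (pow_ne_zero _ hne), ← hadd]
    congr 2
    ring
  calc (1 / (d : ℂ)) * ∑ x : ZMod d, (ω ^ (((r : ZMod d)) * x).val)⁻¹ * (ω ^ (n x).val) ^ r
      = (1 / (d : ℂ)) * ∑ x : ZMod d, (ω ^ ((n x - x).val)) ^ r := by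
        rw [Finset.sum_congr rfl fun x _ => key x]
    _ = (1 / (d : ℂ)) * ∑ ν : ZMod d,
          ((univ.filter fun x : ZMod d => n x - x = ν).card : ℂ) * (ω ^ ν.val) ^ r := by
        congr 1
        rw [← Finset.sum_fiberwise (g := fun x : ZMod d => n x - x)
          (f := fun x => (ω ^ ((n x - x).val)) ^ r)]
        refine Finset.sum_congr rfl fun ν _ => ?_
        rw [Finset.sum_congr rfl (fun x hx => by
          rw [(Finset.mem_filter.mp hx).2]), Finset.sum_const, nsmul_eq_mul]
    _ = ∑ ν : ZMod d, (lam ν : ℂ) * (ω ^ ν.val) ^ r := by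
        rw [Finset.mul_sum]
        refine Finset.sum_congr rfl fun ν _ => ?_
        rw [hlam ν]
        push_cast
        ring
end

section
/- (Classical bound transfer.) If B ∈ ℝ is such that I(m_a, b) ≤ B for every a : X → ZMod d and every b : Y → ZMod d (i.e., B is a bound on all linear strategies, corresponding to the classical bound of the associated Bell inequality), then I(m, b) ≤ B for every message function m : ZMod d × X → ZMod d and every b : Y → ZMod d. -/
set_option maxHeartbeats 1000000

open Finset

noncomputable def Tsum (d : ℕ) [NeZero d] {X Y J : Type} [Fintype X] [Fintype Y] [Fintype J]
    (p : X × Y → ℝ) (c : J × X × Y → ℝ) (F : J × X × Y → ZMod d)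
    (a : X → ZMod d) (b : Y → ZMod d) : ℝ :=
  ∑ xy : X × Y, p xy * ∑ j : J,
    c (j, xy.1, xy.2) *
      (if a xy.1 + b xy.2 = F (j, xy.1, xy.2) then (1 : ℝ) else 0)

lemma payoff_linear (d : ℕ) [NeZero d] {X Y J : Type} [Fintype X] [Fintype Y] [Fintype J]
    (p : X × Y → ℝ) (c : J × X × Y → ℝ) (F : J × X × Y → ZMod d)
    (a : X → ZMod d) (b : Y → ZMod d) :
    payoff d p c F (fun z => z.1 + a z.2) b = Tsum d p c F a b := by
  have hd : (0:ℝ) < d := Nat.cast_pos.mpr (Nat.pos_of_ne_zero (NeZero.ne d))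
  unfold payoff
  have h1 : ∀ x0 : ZMod d, (∑ xy : X × Y, p xy * ∑ j : J,
      c (j, xy.1, xy.2) *
        (if x0 + a xy.1 + b xy.2 = x0 + F (j, xy.1, xy.2) then (1 : ℝ) else 0))
      = Tsum d p c F a b := by
    intro x0
    unfold Tsum
    simp only [add_assoc, add_right_inj]
  simp only [h1]
  rw [Finset.sum_const, Finset.card_univ, ZMod.card, nsmul_eq_mul]
  field_simp

lemma payoff_avg (d : ℕ) [NeZero d] {X Y J : Type} [Fintype X] [Fintype Y] [Fintype J]
    (p : X × Y → ℝ) (c : J × X × Y → ℝ) (F : J × X × Y → ZMod d)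
    (m : ZMod d × X → ZMod d) (b : Y → ZMod d) :
    payoff d p c F m b
      = (1 / (d : ℝ)) * ∑ x0 : ZMod d, Tsum d p c F (fun x => m (x0, x) - x0) b := by
  unfold payoff Tsum
  congr 1
  refine Finset.sum_congr rfl fun x0 _ => ?_
  refine Finset.sum_congr rfl fun xy _ => ?_
  congr 1
  refine Finset.sum_congr rfl fun j _ => ?_
  congr 1
  have h : (m (x0, xy.1) + b xy.2 = x0 + F (j, xy.1, xy.2))
      ↔ (m (x0, xy.1) - x0 + b xy.2 = F (j, xy.1, xy.2)) := by
    rw [sub_add_eq_add_sub, sub_eq_iff_eq_add, add_comm (F (j, xy.1, xy.2)) x0]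
  simp [h]

/-- Classical bound transfer: if `B` bounds the payoff of every linear strategy
`m_a(x0, x) = x0 + a x` (the classical bound of the associated Bell inequality), then `B`
bounds the payoff of every classical strategy. -/
theorem classical_bound_transfer (d : ℕ) [NeZero d] (X Y J : Type)
    [Fintype X] [Fintype Y] [Fintype J]
    (p : X × Y → ℝ) (hp : ∀ xy, 0 ≤ p xy)
    (c : J × X × Y → ℝ) (F : J × X × Y → ZMod d)
    (B : ℝ)
    (hB : ∀ (a : X → ZMod d) (b : Y → ZMod d),
      payoff d p c F (fun z => z.1 + a z.2) b ≤ B) :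
    ∀ (m : ZMod d × X → ZMod d) (b : Y → ZMod d), payoff d p c F m b ≤ B := by
  intro m b
  have hd : (0:ℝ) < d := Nat.cast_pos.mpr (Nat.pos_of_ne_zero (NeZero.ne d))
  have hlin : ∀ a : X → ZMod d, Tsum d p c F a b ≤ B := fun a =>
    (payoff_linear d p c F a b) ▸ hB a b
  rw [payoff_avg]
  have hsum : ∑ x0 : ZMod d, Tsum d p c F (fun x => m (x0, x) - x0) b ≤ (d : ℝ) * B := by
    have h2 : ∑ _x0 : ZMod d, B = (d : ℝ) * B := by
      rw [Finset.sum_const, Finset.card_univ, ZMod.card, nsmul_eq_mul]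
    rw [← h2]
    exact Finset.sum_le_sum fun x0 _ => hlin (fun x => m (x0, x) - x0)
  calc (1 / (d : ℝ)) * ∑ x0 : ZMod d, Tsum d p c F (fun x => m (x0, x) - x0) b
      ≤ (1 / (d : ℝ)) * ((d : ℝ) * B) := by
        exact mul_le_mul_of_nonneg_left hsum (by positivity)
    _ = B := by field_simp
end
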